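/- arXiv:1509.01545 — 3 statements merged into one kernel-verified Lean document; each statement's English description precedes it below -/
import Mathlib

section
/- If f : ℕ → ℕ ∪ {⊥} is the partially defined function with f(3n) = 2n-1 for n ≥ 1, f(3n-1) = 2n for n ≥ 2, and f undefined (⊥) otherwise, then for every k ≥ 0 the natural density of the set of n such that n, f(n), f²(n), …, f^k(n) are all defined (avoid ⊥) equals (2/3)^{k+1}. -/
/-- The partially defined map `f(3n) = 2n - 1` (for `n ≥ 1`), `f(3n-1) = 2n` (for `n ≥ 2`),
undefined otherwise. -/
def hilf (m : ℕ) : Option ℕ :=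
  if m % 3 = 0 ∧ 3 ≤ m then some (2 * (m / 3) - 1)
  else if m % 3 = 2 ∧ 5 ≤ m then some (2 * ((m + 1) / 3))
  else none

noncomputable def q (j m : ℕ) : Prop :=
  (((fun o : Option ℕ => o.bind hilf)^[j]) (some m)).isSome

noncomputable instance : ∀ j, DecidablePred (q j) := fun j m => by
  unfold q; infer_instance

lemma G_none (j : ℕ) : ((fun o : Option ℕ => o.bind hilf)^[j]) none = none := by
  induction j with
  | zero => rfl
  | succ n ih => rw [Function.iterate_succ_apply]; simpa using ih

lemma q_succ (j n : ℕ) : q (j+1) n ↔ ∃ m, hilf n = some m ∧ q j m := by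
  unfold q
  rw [Function.iterate_succ_apply]
  cases h : hilf n with
  | none => simp [h, G_none]
  | some m => simp [h, q]

noncomputable def F (j x : ℕ) : ℕ := ((Finset.Icc 1 x).filter (q j)).card

lemma hilf_mod0 (n : ℕ) (h : n % 3 = 0) (h3 : 3 ≤ n) : hilf n = some (2 * (n / 3) - 1) := by
  simp [hilf, h, h3]

lemma hilf_mod2 (n : ℕ) (h : n % 3 = 2) (h5 : 5 ≤ n) : hilf n = some (2 * ((n + 1) / 3)) := by
  simp [hilf, h, h5]

lemma hilf_none (n : ℕ) (h : ¬ ((n % 3 = 0 ∧ 3 ≤ n) ∨ (n % 3 = 2 ∧ 5 ≤ n))) : hilf n = none := by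
  unfold hilf
  rw [if_neg (fun hc => h (Or.inl hc)), if_neg (fun hc => h (Or.inr hc))]

lemma count_succ (j x : ℕ) :
    F (j+1) x = ((Finset.Icc 1 (x/3)).filter (fun t => q j (2*t-1))).card
              + ((Finset.Icc 2 ((x+1)/3)).filter (fun t => q j (2*t))).card := by
  unfold F
  rw [← Finset.card_filter_add_card_filter_not (p := fun n => n % 3 = 0)]
  congr 1
  · -- residue 0 part ↔ t-count
    rw [Finset.filter_filter]
    refine Finset.card_bij' (fun n _ => n / 3) (fun t _ => 3 * t) ?_ ?_ (fun n hn => ?_) (fun t ht => ?_)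
    rotate_left 2
    · simp only [Finset.mem_filter, Finset.mem_Icc] at hn
      beta_reduce
      omega
    · beta_reduce
      omega
    · intro n hn
      simp only [Finset.mem_filter, Finset.mem_Icc] at hn ⊢
      obtain ⟨⟨h1, h2⟩, hq, h0⟩ := hn
      have h3 : 3 ≤ n := by omega
      refine ⟨⟨by omega, by omega⟩, ?_⟩
      rw [q_succ] at hq
      obtain ⟨m, hm, hqm⟩ := hq
      rw [hilf_mod0 n h0 h3] at hm
      cases hm
      exact hqm
    · intro t ht
      simp only [Finset.mem_filter, Finset.mem_Icc] at ht ⊢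
      obtain ⟨⟨h1, h2⟩, hq⟩ := ht
      refine ⟨⟨by omega, by omega⟩, ?_, by omega⟩
      rw [q_succ]
      refine ⟨2 * t - 1, ?_, ?_⟩
      · rw [hilf_mod0 (3*t) (by omega) (by omega)]
        congr 1
        omega
      · exact hq
  · -- residue 2 part ↔ t-count
    rw [Finset.filter_filter]
    have hset : ((Finset.Icc 1 x).filter (fun n => q (j+1) n ∧ ¬ n % 3 = 0))
        = ((Finset.Icc 1 x).filter (fun n => q (j+1) n ∧ n % 3 = 2)) := by
      apply Finset.filter_congr
      intro n hn
      simp only [Finset.mem_Icc] at hn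
      constructor
      · rintro ⟨hq, h0⟩
        refine ⟨hq, ?_⟩
        by_contra h2
        rw [q_succ] at hq
        obtain ⟨m, hm, _⟩ := hq
        rw [hilf_none n (by omega)] at hm
        exact Option.noConfusion rfl (heq_of_eq hm)
      · rintro ⟨hq, h2⟩
        exact ⟨hq, by omega⟩
    rw [hset]
    refine Finset.card_bij' (fun n _ => (n + 1) / 3) (fun t _ => 3 * t - 1) ?_ ?_ (fun n hn => ?_) (fun t ht => ?_)
    rotate_left 2
    · simp only [Finset.mem_filter, Finset.mem_Icc] at hn
      beta_reduce
      omega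
    · simp only [Finset.mem_filter, Finset.mem_Icc] at ht
      beta_reduce
      omega
    · intro n hn
      simp only [Finset.mem_filter, Finset.mem_Icc] at hn ⊢
      obtain ⟨⟨h1, h2⟩, hq, h0⟩ := hn
      have h5 : 5 ≤ n := by
        by_contra h5
        rw [q_succ] at hq
        obtain ⟨m, hm, _⟩ := hq
        rw [hilf_none n (by omega)] at hm
        exact Option.noConfusion rfl (heq_of_eq hm)
      refine ⟨⟨by omega, by omega⟩, ?_⟩
      rw [q_succ] at hq
      obtain ⟨m, hm, hqm⟩ := hq
      rw [hilf_mod2 n h0 h5] at hm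
      cases hm
      exact hqm
    · intro t ht
      simp only [Finset.mem_filter, Finset.mem_Icc] at ht ⊢
      obtain ⟨⟨h1, h2⟩, hq⟩ := ht
      refine ⟨⟨by omega, by omega⟩, ?_, by omega⟩
      rw [q_succ]
      refine ⟨2 * t, ?_, hq⟩
      rw [hilf_mod2 (3*t-1) (by omega) (by omega)]
      congr 1
      omega

lemma odd_count (j a : ℕ) :
    ((Finset.Icc 1 a).filter (fun t => q j (2*t-1))).card
      = ((Finset.Icc 1 (2*a)).filter (fun m => q j m ∧ m % 2 = 1)).card := by
  refine Finset.card_bij' (fun t _ => 2*t-1) (fun m _ => (m+1)/2) ?_ ?_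
    (fun t ht => ?_) (fun m hm => ?_)
  rotate_left 2
  · simp only [Finset.mem_filter, Finset.mem_Icc] at ht
    beta_reduce
    omega
  · simp only [Finset.mem_filter, Finset.mem_Icc] at hm
    beta_reduce
    omega
  · intro t ht
    simp only [Finset.mem_filter, Finset.mem_Icc] at ht ⊢
    exact ⟨⟨by omega, by omega⟩, ht.2, by omega⟩
  · intro m hm
    simp only [Finset.mem_filter, Finset.mem_Icc] at hm ⊢
    obtain ⟨⟨h1, h2⟩, hq, ho⟩ := hm
    refine ⟨⟨by omega, by omega⟩, ?_⟩
    have : 2 * ((m+1)/2) - 1 = m := by omega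
    rw [this]
    exact hq

lemma even_count (j b : ℕ) :
    ((Finset.Icc 2 b).filter (fun t => q j (2*t))).card
      = ((Finset.Icc 4 (2*b)).filter (fun m => q j m ∧ m % 2 = 0)).card := by
  refine Finset.card_bij' (fun t _ => 2*t) (fun m _ => m/2) ?_ ?_
    (fun t ht => ?_) (fun m hm => ?_)
  rotate_left 2
  · beta_reduce
    omega
  · simp only [Finset.mem_filter, Finset.mem_Icc] at hm
    beta_reduce
    omega
  · intro t ht
    simp only [Finset.mem_filter, Finset.mem_Icc] at ht ⊢
    exact ⟨⟨by omega, by omega⟩, ht.2, by omega⟩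
  · intro m hm
    simp only [Finset.mem_filter, Finset.mem_Icc] at hm ⊢
    obtain ⟨⟨h1, h2⟩, hq, ho⟩ := hm
    refine ⟨⟨by omega, by omega⟩, ?_⟩
    have : 2 * (m/2) = m := by omega
    rw [this]
    exact hq

lemma parity_split (j c : ℕ) :
    F j c = ((Finset.Icc 1 c).filter (fun m => q j m ∧ m % 2 = 1)).card
          + ((Finset.Icc 1 c).filter (fun m => q j m ∧ m % 2 = 0)).card := by
  unfold F
  rw [← Finset.card_filter_add_card_filter_not (p := fun m => m % 2 = 1),
    Finset.filter_filter, Finset.filter_filter]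
  congr 2
  apply Finset.filter_congr
  intro m _
  constructor
  · rintro ⟨hq, h⟩; exact ⟨hq, by omega⟩
  · rintro ⟨hq, h⟩; exact ⟨hq, by omega⟩

lemma even_compare (j a b : ℕ) (hab : a ≤ b) (hba : b ≤ a + 1) :
    ((Finset.Icc 4 (2*b)).filter (fun m => q j m ∧ m % 2 = 0)).card
      ≤ ((Finset.Icc 1 (2*a)).filter (fun m => q j m ∧ m % 2 = 0)).card + 1
    ∧ ((Finset.Icc 1 (2*a)).filter (fun m => q j m ∧ m % 2 = 0)).card
      ≤ ((Finset.Icc 4 (2*b)).filter (fun m => q j m ∧ m % 2 = 0)).card + 1 := by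
  constructor
  · calc ((Finset.Icc 4 (2*b)).filter (fun m => q j m ∧ m % 2 = 0)).card
        ≤ (((Finset.Icc 1 (2*a)).filter (fun m => q j m ∧ m % 2 = 0)) ∪ {2*a+2}).card := by
          apply Finset.card_le_card
          intro m hm
          simp only [Finset.mem_filter, Finset.mem_Icc, Finset.mem_union,
            Finset.mem_singleton] at hm ⊢
          obtain ⟨⟨h4, hb2⟩, hq, he⟩ := hm
          by_cases hle : m ≤ 2*a
          · exact Or.inl ⟨⟨by omega, hle⟩, hq, he⟩
          · exact Or.inr (by omega)
      _ ≤ _ := by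
          refine (Finset.card_union_le _ _).trans ?_
          simp
  · calc ((Finset.Icc 1 (2*a)).filter (fun m => q j m ∧ m % 2 = 0)).card
        ≤ (((Finset.Icc 4 (2*b)).filter (fun m => q j m ∧ m % 2 = 0)) ∪ {2}).card := by
          apply Finset.card_le_card
          intro m hm
          simp only [Finset.mem_filter, Finset.mem_Icc, Finset.mem_union,
            Finset.mem_singleton] at hm ⊢
          obtain ⟨⟨h1, ha2⟩, hq, he⟩ := hm
          by_cases hge : 4 ≤ m
          · exact Or.inl ⟨⟨hge, by omega⟩, hq, he⟩
          · exact Or.inr (by omega)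
      _ ≤ _ := by
          refine (Finset.card_union_le _ _).trans ?_
          simp

lemma step_bound (j x : ℕ) :
    F (j+1) x ≤ F j (2*(x/3)) + 1 ∧ F j (2*(x/3)) ≤ F (j+1) x + 1 := by
  have h1 := count_succ j x
  have h2 := parity_split j (2*(x/3))
  have h3 := odd_count j (x/3)
  have h4 := even_count j ((x+1)/3)
  have h5 := even_compare j (x/3) ((x+1)/3) (by omega) (by omega)
  omega

lemma key : ∀ j x : ℕ, |(F j x : ℝ) - (2/3)^j * x| ≤ 4*j := by
  intro j
  induction j with
  | zero =>
    intro x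
    have : F 0 x = x := by
      unfold F
      rw [Finset.filter_true_of_mem, Nat.card_Icc]
      · omega
      · intro m _
        simp [q]
    rw [this]
    simp
  | succ j ih =>
    intro x
    have hb := step_bound j x
    have ih' := ih (2*(x/3))
    have hd : 3*(x/3) ≤ x ∧ x ≤ 3*(x/3) + 2 := by omega
    have h1 : |(F (j+1) x : ℝ) - (F j (2*(x/3)) : ℝ)| ≤ 1 := by
      rw [abs_le]
      obtain ⟨hb1, hb2⟩ := hb
      constructor
      · have := (Nat.cast_le (α := ℝ)).2 hb2
        push_cast at this
        linarith
      · have := (Nat.cast_le (α := ℝ)).2 hb1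
        push_cast at this
        linarith
    have h2 : |((2*(x/3) : ℕ) : ℝ) - (2/3)*x| ≤ 2 := by
      have c1 := (Nat.cast_le (α := ℝ)).2 hd.1
      have c2 := (Nat.cast_le (α := ℝ)).2 hd.2
      push_cast at c1 c2 ⊢
      rw [abs_le]
      constructor <;> linarith
    have hpow0 : (0:ℝ) ≤ (2/3:ℝ)^j := by positivity
    have hpow1 : (2/3:ℝ)^j ≤ 1 := pow_le_one₀ (by norm_num) (by norm_num)
    have key3 : |(2/3:ℝ)^j * (2*(x/3) : ℕ) - (2/3)^(j+1) * x| ≤ 2 := by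
      have : (2/3:ℝ)^(j+1) * x = (2/3)^j * ((2/3)*x) := by ring
      rw [this, ← mul_sub, abs_mul, abs_of_nonneg hpow0]
      calc (2/3:ℝ)^j * |((2*(x/3):ℕ):ℝ) - (2/3)*x| ≤ 1 * 2 := by
            apply mul_le_mul hpow1 h2 (abs_nonneg _) (by norm_num)
        _ = 2 := by norm_num
    calc |(F (j+1) x : ℝ) - (2/3)^(j+1) * x|
        ≤ |(F (j+1) x : ℝ) - (F j (2*(x/3)) : ℝ)|
          + |(F j (2*(x/3)) : ℝ) - (2/3)^j * (2*(x/3) : ℕ)|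
          + |(2/3:ℝ)^j * ((2*(x/3):ℕ):ℝ) - (2/3)^(j+1) * x| := by
          apply abs_sub_le _ _ _ |>.trans
          gcongr
          exact abs_sub_le _ _ _
      _ ≤ 1 + 4*(j:ℝ) + 2 := by
          gcongr
      _ ≤ 4*((j:ℕ)+1:ℕ) := by push_cast; linarith

theorem stmt4 (k : ℕ) :
    Filter.Tendsto
      (fun x : ℕ =>
        (((Finset.Icc 1 x).filter
            (fun n => (((fun o : Option ℕ => o.bind hilf)^[k + 1]) (some n)).isSome)).card : ℝ) / x)
      Filter.atTop (nhds ((2 / 3 : ℝ) ^ (k + 1))) := by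
  have hFeq : (fun x : ℕ =>
      (((Finset.Icc 1 x).filter
          (fun n => (((fun o : Option ℕ => o.bind hilf)^[k + 1]) (some n)).isSome)).card : ℝ) / x)
      = fun x : ℕ => (F (k+1) x : ℝ) / x := rfl
  rw [hFeq]
  set L : ℝ := (2/3:ℝ)^(k+1) with hL
  have h0 : Filter.Tendsto (fun x : ℕ => (4*(k+1):ℝ)/x) Filter.atTop (nhds 0) :=
    tendsto_const_div_atTop_nhds_zero_nat _
  have h1 : Filter.Tendsto (fun x : ℕ => (F (k+1) x : ℝ)/x - L) Filter.atTop (nhds 0) := by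
    apply squeeze_zero_norm' ?_ h0
    filter_upwards [Filter.eventually_ge_atTop 1] with x hx
    have hx0 : (0:ℝ) < x := by exact_mod_cast hx
    have hkey := key (k+1) x
    have heq : (F (k+1) x : ℝ)/x - L = ((F (k+1) x : ℝ) - L*x)/x := by
      field_simp
    rw [Real.norm_eq_abs, heq, abs_div, abs_of_pos hx0]
    rw [div_le_div_iff₀ hx0 hx0]
    have : |(F (k+1) x : ℝ) - L*x| ≤ 4*((k:ℝ)+1) := by
      rw [hL]
      push_cast at hkey
      exact hkey
    nlinarith [abs_nonneg ((F (k+1) x : ℝ) - L*x)]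
  have h2 := h1.add_const L
  simpa using h2
end

section
/- The set of natural numbers n such that both n and n+1 are squarefree has natural density c = ∏_p (1 - 2/p²), where the product runs over all primes p. -/
open scoped Classical

lemma dvd_iff_of_modEq {a b m d : ℕ} (h : a ≡ b [MOD m]) (hd : d ∣ m) : d ∣ a ↔ d ∣ b := by
  have h' : a ≡ b [MOD d] := Nat.ModEq.of_dvd hd h
  rw [← Nat.modEq_zero_iff_dvd, ← Nat.modEq_zero_iff_dvd]
  exact ⟨fun ha => h'.symm.trans ha, fun hb => h'.trans hb⟩

lemma pred_congr {P : Finset ℕ} {M a b : ℕ} (hM : ∀ p ∈ P, p^2 ∣ M) (h : a ≡ b [MOD M]) :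
    (∀ p ∈ P, ¬ p^2 ∣ a ∧ ¬ p^2 ∣ (a+1)) ↔ (∀ p ∈ P, ¬ p^2 ∣ b ∧ ¬ p^2 ∣ (b+1)) := by
  apply forall₂_congr
  intro p hp
  rw [dvd_iff_of_modEq h (hM p hp), dvd_iff_of_modEq (h.add_right 1) (hM p hp)]

lemma count_prime_sq (p : ℕ) (hp : p.Prime) :
    ((Finset.range (p^2)).filter (fun n => ¬ p^2 ∣ n ∧ ¬ p^2 ∣ (n+1))).card = p^2 - 2 := by
  have hp2 : 4 ≤ p ^ 2 := by
    have := hp.two_le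
    calc 4 = 2^2 := rfl
    _ ≤ p^2 := Nat.pow_le_pow_left this 2
  have heq : (Finset.range (p^2)).filter (fun n => ¬ p^2 ∣ n ∧ ¬ p^2 ∣ (n+1))
      = Finset.range (p^2) \ {0, p^2 - 1} := by
    ext n
    simp only [Finset.mem_filter, Finset.mem_range, Finset.mem_sdiff, Finset.mem_insert,
      Finset.mem_singleton]
    constructor
    · rintro ⟨hn, h1, h2⟩
      refine ⟨hn, ?_⟩
      push_neg
      constructor
      · rintro rfl; exact h1 (dvd_zero _)
      · rintro rfl; exact h2 (by rw [Nat.sub_add_cancel (by omega)])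
    · rintro ⟨hn, h⟩
      push_neg at h
      refine ⟨hn, ?_, ?_⟩
      · intro hd
        exact h.1 (Nat.eq_zero_of_dvd_of_lt hd hn)
      · intro hd
        have : p^2 ≤ n + 1 := Nat.le_of_dvd (by omega) hd
        have : n + 1 = p^2 := by omega
        exact h.2 (by omega)
  rw [heq, Finset.card_sdiff_of_subset]
  · rw [Finset.card_range]
    have : ({0, p^2 - 1} : Finset ℕ).card = 2 := by
      rw [Finset.card_insert_of_notMem (by simp; omega), Finset.card_singleton]
    omega
  · intro n hn
    simp only [Finset.mem_insert, Finset.mem_singleton] at hn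
    rcases hn with rfl | rfl <;> simp [Finset.mem_range] <;> omega

lemma crt_count (P : Finset ℕ) (hP : ∀ p ∈ P, Nat.Prime p) :
    ((Finset.range (∏ p ∈ P, p^2)).filter
      (fun n => ∀ p ∈ P, ¬ p^2 ∣ n ∧ ¬ p^2 ∣ (n+1))).card = ∏ p ∈ P, (p^2 - 2) := by
  induction P using Finset.induction_on with
  | empty => simp
  | @insert p P hpP ih =>
    have hp : p.Prime := hP p (Finset.mem_insert_self p P)
    have hP' : ∀ q ∈ P, Nat.Prime q := fun q hq => hP q (Finset.mem_insert_of_mem hq)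
    set m := p ^ 2 with hm
    set M := ∏ q ∈ P, q ^ 2 with hMdef
    have hco : Nat.Coprime m M := by
      apply Nat.Coprime.prod_right
      intro q hq
      exact Nat.Coprime.pow _ _ ((Nat.coprime_primes hp (hP' q hq)).mpr (fun h => hpP (h ▸ hq)))
    have hm0 : 0 < m := pow_pos hp.pos 2
    have hM0 : 0 < M := Finset.prod_pos (fun q hq => pow_pos (hP' q hq).pos 2)
    have hdvdM : ∀ q ∈ P, q ^ 2 ∣ M := fun q hq => Finset.dvd_prod_of_mem _ hq
    rw [Finset.prod_insert hpP, Finset.prod_insert hpP]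
    rw [← count_prime_sq p hp, ← ih hP', ← Finset.card_product]
    apply Finset.card_bij' (fun n _ => (n % m, n % M))
      (fun uv _ => (Nat.chineseRemainder hco uv.1 uv.2 : ℕ) % (m * M))
    · -- maps into product
      intro n hn
      simp only [Finset.mem_filter, Finset.mem_range] at hn
      obtain ⟨hlt, hpred⟩ := hn
      have h1 := hpred p (Finset.mem_insert_self p P)
      have h2 : ∀ q ∈ P, ¬ q^2 ∣ n ∧ ¬ q^2 ∣ (n+1) :=
        fun q hq => hpred q (Finset.mem_insert_of_mem hq)
      simp only [Finset.mem_product, Finset.mem_filter, Finset.mem_range]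
      have hmodm : n % m ≡ n [MOD m] := Nat.mod_modEq n m
      have hmodM : n % M ≡ n [MOD M] := Nat.mod_modEq n M
      refine ⟨⟨Nat.mod_lt _ hm0, ?_, ?_⟩, Nat.mod_lt _ hM0, ?_⟩
      · rw [dvd_iff_of_modEq hmodm (dvd_refl m)]; exact h1.1
      · rw [dvd_iff_of_modEq (hmodm.add_right 1) (dvd_refl m)]; exact h1.2
      · exact (pred_congr hdvdM hmodM).mpr h2
    · -- j maps into filter
      intro uv huv
      simp only [Finset.mem_product, Finset.mem_filter, Finset.mem_range] at huv
      obtain ⟨⟨hu, hu1, hu2⟩, hv, hvpred⟩ := huv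
      set w := (Nat.chineseRemainder hco uv.1 uv.2 : ℕ) with hw
      have hwu : w ≡ uv.1 [MOD m] := (Nat.chineseRemainder hco uv.1 uv.2).2.1
      have hwv : w ≡ uv.2 [MOD M] := (Nat.chineseRemainder hco uv.1 uv.2).2.2
      have hnw : w % (m*M) ≡ w [MOD m*M] := Nat.mod_modEq w (m*M)
      have hnm : w % (m*M) ≡ uv.1 [MOD m] :=
        (Nat.ModEq.of_dvd (dvd_mul_right m M) hnw).trans hwu
      have hnM : w % (m*M) ≡ uv.2 [MOD M] :=
        (Nat.ModEq.of_dvd (dvd_mul_left M m) hnw).trans hwv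
      simp only [Finset.mem_filter, Finset.mem_range]
      refine ⟨Nat.mod_lt _ (by positivity), ?_⟩
      intro q hq
      rcases Finset.mem_insert.mp hq with rfl | hq'
      · exact ⟨(dvd_iff_of_modEq hnm (dvd_refl m)).not.mpr hu1,
          (dvd_iff_of_modEq (hnm.add_right 1) (dvd_refl m)).not.mpr hu2⟩
      · exact (pred_congr hdvdM hnM).mpr hvpred q hq' |>.imp id id
    · -- right inverse: j (i n) = n
      intro n hn
      simp only [Finset.mem_filter, Finset.mem_range] at hn
      set w := (Nat.chineseRemainder hco (n % m) (n % M) : ℕ) with hw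
      have hwu : w ≡ n % m [MOD m] := (Nat.chineseRemainder hco (n % m) (n % M)).2.1
      have hwv : w ≡ n % M [MOD M] := (Nat.chineseRemainder hco (n % m) (n % M)).2.2
      have h1 : w ≡ n [MOD m] := hwu.trans (Nat.mod_modEq n m)
      have h2 : w ≡ n [MOD M] := hwv.trans (Nat.mod_modEq n M)
      have : w ≡ n [MOD m * M] := (Nat.modEq_and_modEq_iff_modEq_mul hco).mp ⟨h1, h2⟩
      have := this.symm
      unfold Nat.ModEq at this
      rw [Nat.mod_eq_of_lt hn.1] at this
      simpa using this.symm
    · -- left inverse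
      intro uv huv
      simp only [Finset.mem_product, Finset.mem_filter, Finset.mem_range] at huv
      set w := (Nat.chineseRemainder hco uv.1 uv.2 : ℕ) with hw
      have hwu : w ≡ uv.1 [MOD m] := (Nat.chineseRemainder hco uv.1 uv.2).2.1
      have hwv : w ≡ uv.2 [MOD M] := (Nat.chineseRemainder hco uv.1 uv.2).2.2
      have hnw : w % (m*M) ≡ w [MOD m*M] := Nat.mod_modEq w (m*M)
      have hnm : w % (m*M) ≡ uv.1 [MOD m] :=
        (Nat.ModEq.of_dvd (dvd_mul_right m M) hnw).trans hwu
      have hnM : w % (m*M) ≡ uv.2 [MOD M] :=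
        (Nat.ModEq.of_dvd (dvd_mul_left M m) hnw).trans hwv
      unfold Nat.ModEq at hnm hnM
      rw [Nat.mod_eq_of_lt huv.1.1] at hnm
      rw [Nat.mod_eq_of_lt huv.2.1] at hnM
      exact Prod.ext hnm hnM

lemma window_count (M : ℕ) (pr : ℕ → Prop) [DecidablePred pr] (hper : ∀ n, pr (n + M) ↔ pr n) (a : ℕ) :
    ((Finset.Ico a (a + M)).filter pr).card = ((Finset.range M).filter pr).card := by
  induction a with
  | zero => rw [Finset.range_eq_Ico, Nat.zero_add]
  | succ a ih =>
    rw [← ih]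
    have h1 : Finset.Ico a (a + M + 1) = Finset.Ico a (a + 1) ∪ Finset.Ico (a + 1) (a + M + 1) :=
      (Finset.Ico_union_Ico_eq_Ico (by omega) (by omega)).symm
    have h2 : Finset.Ico a (a + M + 1) = Finset.Ico a (a + M) ∪ Finset.Ico (a + M) (a + M + 1) :=
      (Finset.Ico_union_Ico_eq_Ico (by omega) (by omega)).symm
    have e1 : ((Finset.Ico a (a + M + 1)).filter pr).card
        = ((Finset.Ico a (a+1)).filter pr).card + ((Finset.Ico (a+1) (a + M + 1)).filter pr).card := by
      rw [h1, Finset.filter_union, Finset.card_union_of_disjoint]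
      exact Finset.disjoint_filter_filter (Finset.Ico_disjoint_Ico_consecutive a (a+1) (a+M+1))
    have e2 : ((Finset.Ico a (a + M + 1)).filter pr).card
        = ((Finset.Ico a (a+M)).filter pr).card + ((Finset.Ico (a+M) (a + M + 1)).filter pr).card := by
      rw [h2, Finset.filter_union, Finset.card_union_of_disjoint]
      exact Finset.disjoint_filter_filter (Finset.Ico_disjoint_Ico_consecutive a (a+M) (a+M+1))
    have s1 : Finset.Ico a (a+1) = {a} := by exact Nat.Ico_succ_singleton _
    have s2 : Finset.Ico (a+M) (a+M+1) = {a+M} := by exact Nat.Ico_succ_singleton _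
    have c1 : ((Finset.Ico a (a+1)).filter pr).card = ((Finset.Ico (a+M) (a+M+1)).filter pr).card := by
      rw [s1, s2]
      by_cases h : pr a
      · rw [Finset.filter_singleton, Finset.filter_singleton, if_pos h, if_pos ((hper a).mpr h)]
        simp
      · rw [Finset.filter_singleton, Finset.filter_singleton, if_neg h,
          if_neg (fun hh => h ((hper a).mp hh))]
    have : a + 1 + M = a + M + 1 := by omega
    rw [this]
    omega

lemma block_count (M : ℕ) (pr : ℕ → Prop) [DecidablePred pr] (hper : ∀ n, pr (n + M) ↔ pr n) (a q : ℕ) :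
    ((Finset.Ico a (a + q * M)).filter pr).card = q * ((Finset.range M).filter pr).card := by
  induction q with
  | zero => simp
  | succ q ih =>
    have h : Finset.Ico a (a + (q+1) * M) = Finset.Ico a (a + q*M) ∪ Finset.Ico (a + q*M) (a + (q+1)*M) :=
      (Finset.Ico_union_Ico_eq_Ico (by nlinarith) (by nlinarith)).symm
    rw [h, Finset.filter_union, Finset.card_union_of_disjoint
      (Finset.disjoint_filter_filter (Finset.Ico_disjoint_Ico_consecutive _ _ _)), ih]
    have : a + (q+1)*M = (a + q*M) + M := by ring
    rw [this, window_count M pr hper (a + q*M)]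
    ring

lemma sum_Ioc_inv_sq_le (y b : ℕ) (hy : 1 ≤ y) :
    ∑ m ∈ Finset.Ioc y b, (1:ℝ)/(m:ℝ)^2 ≤ 1/(y:ℝ) := by
  rcases le_or_gt b y with h | h
  · rw [Finset.Ioc_eq_empty (by omega)]
    simp
  · obtain ⟨k, rfl⟩ : ∃ k, b = y + k := ⟨b - y, by omega⟩
    have key : ∀ k : ℕ, ∑ m ∈ Finset.Ioc y (y+k), (1:ℝ)/(m:ℝ)^2 ≤ 1/(y:ℝ) - 1/((y:ℝ)+k) := by
      intro k
      induction k with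
      | zero => simp
      | succ k ih =>
        have hins : Finset.Ioc y (y+k+1) = insert (y+k+1) (Finset.Ioc y (y+k)) := by
          ext n
          simp only [Finset.mem_Ioc, Finset.mem_insert]
          omega
        have hnotmem : y+k+1 ∉ Finset.Ioc y (y+k) := by simp
        have hyk : (0:ℝ) < (y:ℝ) + k := by positivity
        have hyk1 : (0:ℝ) < (y:ℝ) + k + 1 := by positivity
        have step : (1:ℝ)/((y:ℝ)+k+1)^2 ≤ 1/((y:ℝ)+k) - 1/((y:ℝ)+k+1) := by
          rw [div_sub_div _ _ (ne_of_gt hyk) (ne_of_gt hyk1)]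
          rw [div_le_div_iff₀ (by positivity) (by positivity)]
          ring_nf
          nlinarith [sq_nonneg ((y:ℝ)+k)]
        have : y + (k+1) = (y + k) + 1 := by omega
        rw [this, hins, Finset.sum_insert hnotmem]
        push_cast
        push_cast at ih step
        rw [show (y:ℝ)+((k:ℝ)+1) = (y:ℝ)+(k:ℝ)+1 from by ring]
        linarith
    calc ∑ m ∈ Finset.Ioc y (y+k), (1:ℝ)/(m:ℝ)^2 ≤ 1/(y:ℝ) - 1/((y:ℝ)+k) := key k
    _ ≤ 1/(y:ℝ) := by
        have : (0:ℝ) < (y:ℝ)+k := by positivity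
        have : (0:ℝ) ≤ 1/((y:ℝ)+k) := by positivity
        linarith

lemma card_dvd_Icc (x d : ℕ) : ((Finset.Icc 1 x).filter (fun n => d ∣ n)).card = x / d := by
  have : Finset.Icc 1 x = Finset.Ioc 0 x := rfl
  rw [this]
  exact Nat.Ioc_filter_dvd_card_eq_div x d

lemma card_dvd_succ_Icc (x d : ℕ) :
    ((Finset.Icc 1 x).filter (fun n => d ∣ (n+1))).card ≤ (x+1) / d := by
  rw [← Nat.Ioc_filter_dvd_card_eq_div (x+1) d]
  apply Finset.card_le_card_of_injOn (fun n => n + 1)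
  · intro n hn
    simp only [Finset.mem_coe, Finset.mem_filter, Finset.mem_Icc, Finset.mem_Ioc] at *
    omega
  · intro a _ b _ h
    simpa using h

lemma tail_bound (y x : ℕ) (hy : 1 ≤ y) :
    (((Finset.Icc 1 x).filter
        (fun n => ∀ p ∈ (Finset.range (y+1)).filter Nat.Prime, ¬ p^2 ∣ n ∧ ¬ p^2 ∣ (n+1))).card : ℝ)
      ≤ (((Finset.Icc 1 x).filter (fun n => Squarefree n ∧ Squarefree (n+1))).card : ℝ)
        + (2*(x:ℝ)+1)/(y:ℝ) := by
  set S := (Finset.Icc 1 x).filter (fun n => Squarefree n ∧ Squarefree (n+1)) with hS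
  set T := (Finset.Icc 1 x).filter
      (fun n => ∀ p ∈ (Finset.range (y+1)).filter Nat.Prime, ¬ p^2 ∣ n ∧ ¬ p^2 ∣ (n+1)) with hT
  have hST : S ⊆ T := by
    rw [hS, hT]
    apply Finset.monotone_filter_right
    rintro n - ⟨h1, h2⟩ p hp
    simp only [Finset.mem_filter, Finset.mem_range] at hp
    have hpp := hp.2
    constructor
    · rw [sq]; exact Nat.squarefree_iff_prime_squarefree.mp h1 p hpp
    · rw [sq]; exact Nat.squarefree_iff_prime_squarefree.mp h2 p hpp
  set PP := (Finset.Ioc y (x+1)).filter Nat.Prime with hPP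
  have hsub : T \ S ⊆ PP.biUnion (fun p => (Finset.Icc 1 x).filter (fun n => p^2 ∣ n ∨ p^2 ∣ (n+1))) := by
    intro n hn
    rw [Finset.mem_sdiff] at hn
    obtain ⟨hnT, hnS⟩ := hn
    rw [hT, Finset.mem_filter] at hnT
    obtain ⟨hnI, hpred⟩ := hnT
    rw [Finset.mem_Icc] at hnI
    have hnotSF : ¬ (Squarefree n ∧ Squarefree (n+1)) := by
      intro h
      exact hnS (Finset.mem_filter.mpr ⟨Finset.mem_Icc.mpr hnI, h⟩)
    have : ∃ p : ℕ, p.Prime ∧ (p^2 ∣ n ∨ p^2 ∣ (n+1)) := by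
      rw [not_and_or] at hnotSF
      rcases hnotSF with h | h
      · rw [Nat.squarefree_iff_prime_squarefree] at h
        push_neg at h
        obtain ⟨p, hp, hd⟩ := h
        exact ⟨p, hp, Or.inl (by rwa [sq])⟩
      · rw [Nat.squarefree_iff_prime_squarefree] at h
        push_neg at h
        obtain ⟨p, hp, hd⟩ := h
        exact ⟨p, hp, Or.inr (by rwa [sq])⟩
    obtain ⟨p, hp, hd⟩ := this
    rw [Finset.mem_biUnion]
    refine ⟨p, ?_, ?_⟩
    · rw [hPP, Finset.mem_filter, Finset.mem_Ioc]
      have hpy : y < p := by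
        by_contra hle
        push_neg at hle
        have hmem : p ∈ (Finset.range (y+1)).filter Nat.Prime := by
          rw [Finset.mem_filter, Finset.mem_range]; exact ⟨by omega, hp⟩
        have := hpred p hmem
        tauto
      have hp2 : p^2 ≤ x + 1 := by
        rcases hd with hd | hd
        · exact le_trans (Nat.le_of_dvd (by omega) hd) (by omega)
        · exact le_trans (Nat.le_of_dvd (by omega) hd) (by omega)
      have : p ≤ p^2 := Nat.le_self_pow (by norm_num) p
      exact ⟨⟨hpy, by omega⟩, hp⟩
    · rw [Finset.mem_filter]
      exact ⟨Finset.mem_Icc.mpr hnI, hd⟩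
  have hcard1 : T.card ≤ S.card + (T \ S).card := by
    have := Finset.card_sdiff_of_subset hST
    have := Finset.card_le_card hST
    omega
  have hcard2 : (T \ S).card ≤ ∑ p ∈ PP, ((Finset.Icc 1 x).filter (fun n => p^2 ∣ n ∨ p^2 ∣ (n+1))).card :=
    le_trans (Finset.card_le_card hsub) (Finset.card_biUnion_le)
  have hBp : ∀ p ∈ PP, (((Finset.Icc 1 x).filter (fun n => p^2 ∣ n ∨ p^2 ∣ (n+1))).card : ℝ)
      ≤ (2*(x:ℝ)+1) * (1/(p:ℝ)^2) := by
    intro p hp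
    rw [hPP, Finset.mem_filter, Finset.mem_Ioc] at hp
    have hp0 : (0:ℝ) < (p:ℝ)^2 := by
      have := hp.2.pos; positivity
    have hsplit : (Finset.Icc 1 x).filter (fun n => p^2 ∣ n ∨ p^2 ∣ (n+1))
        ⊆ (Finset.Icc 1 x).filter (fun n => p^2 ∣ n) ∪ (Finset.Icc 1 x).filter (fun n => p^2 ∣ (n+1)) := by
      intro n hn
      rw [Finset.mem_filter] at hn
      rw [Finset.mem_union, Finset.mem_filter, Finset.mem_filter]
      tauto
    have h1 : ((Finset.Icc 1 x).filter (fun n => p^2 ∣ n ∨ p^2 ∣ (n+1))).card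
        ≤ x / p^2 + (x+1) / p^2 := by
      calc _ ≤ _ := Finset.card_le_card hsplit
      _ ≤ ((Finset.Icc 1 x).filter (fun n => p^2 ∣ n)).card
            + ((Finset.Icc 1 x).filter (fun n => p^2 ∣ (n+1))).card := Finset.card_union_le _ _
      _ ≤ x / p^2 + (x+1) / p^2 := by
          rw [card_dvd_Icc]
          exact Nat.add_le_add_left (card_dvd_succ_Icc x (p^2)) _
    calc (((Finset.Icc 1 x).filter (fun n => p^2 ∣ n ∨ p^2 ∣ (n+1))).card : ℝ)
        ≤ ((x / p^2 + (x+1) / p^2 : ℕ) : ℝ) := by exact_mod_cast h1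
      _ ≤ (x:ℝ)/(p:ℝ)^2 + ((x:ℝ)+1)/(p:ℝ)^2 := by
          push_cast
          gcongr <;> exact_mod_cast Nat.cast_div_le
      _ = (2*(x:ℝ)+1) * (1/(p:ℝ)^2) := by ring
  have hsum : (((T \ S).card : ℝ)) ≤ (2*(x:ℝ)+1)/(y:ℝ) := by
    calc ((T \ S).card : ℝ)
        ≤ ∑ p ∈ PP, (((Finset.Icc 1 x).filter (fun n => p^2 ∣ n ∨ p^2 ∣ (n+1))).card : ℝ) := by
          exact_mod_cast hcard2
      _ ≤ ∑ p ∈ PP, (2*(x:ℝ)+1) * (1/(p:ℝ)^2) := Finset.sum_le_sum hBp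
      _ = (2*(x:ℝ)+1) * ∑ p ∈ PP, 1/(p:ℝ)^2 := by rw [Finset.mul_sum]
      _ ≤ (2*(x:ℝ)+1) * ∑ m ∈ Finset.Ioc y (x+1), 1/(m:ℝ)^2 := by
          apply mul_le_mul_of_nonneg_left
          · apply Finset.sum_le_sum_of_subset_of_nonneg (Finset.filter_subset _ _)
            intro m _ _
            positivity
          · positivity
      _ ≤ (2*(x:ℝ)+1) * (1/(y:ℝ)) := by
          apply mul_le_mul_of_nonneg_left (sum_Ioc_inv_sq_le y (x+1) hy)
          positivity
      _ = (2*(x:ℝ)+1)/(y:ℝ) := by ring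
  calc (T.card : ℝ) ≤ (S.card : ℝ) + ((T \ S).card : ℝ) := by exact_mod_cast hcard1
    _ ≤ (S.card : ℝ) + (2*(x:ℝ)+1)/(y:ℝ) := by linarith

lemma main_count (P : Finset ℕ) (hP : ∀ p ∈ P, Nat.Prime p) (x : ℕ) :
    |(((Finset.Icc 1 x).filter (fun n => ∀ p ∈ P, ¬ p^2 ∣ n ∧ ¬ p^2 ∣ (n+1))).card : ℝ)
      - (x:ℝ) * ((∏ p ∈ P, ((p:ℝ)^2 - 2)) / (∏ p ∈ P, (p:ℝ)^2))| ≤ (∏ p ∈ P, (p:ℝ)^2) := by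
  set M := ∏ p ∈ P, p^2 with hMdef
  set A := ∏ p ∈ P, (p^2 - 2) with hAdef
  have hM0 : 0 < M := Finset.prod_pos (fun p hp => pow_pos (hP p hp).pos 2)
  have hAM : A ≤ M := Finset.prod_le_prod' (fun p _ => Nat.sub_le _ _)
  -- cast products
  have hMcast : ((M:ℕ):ℝ) = ∏ p ∈ P, (p:ℝ)^2 := by
    rw [hMdef]; push_cast; ring
  have hAcast : ((A:ℕ):ℝ) = ∏ p ∈ P, ((p:ℝ)^2 - 2) := by
    rw [hAdef]
    rw [Nat.cast_prod]
    apply Finset.prod_congr rfl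
    intro p hp
    have h4 : 2 ≤ p^2 := by
      have := (hP p hp).two_le
      nlinarith
    push_cast [Nat.cast_sub h4]
    ring
  rw [← hMcast, ← hAcast]
  have hper : ∀ n, (fun n => ∀ p ∈ P, ¬ p^2 ∣ n ∧ ¬ p^2 ∣ (n+1)) (n + M) ↔ (fun n => ∀ p ∈ P, ¬ p^2 ∣ n ∧ ¬ p^2 ∣ (n+1)) n := by
    intro n
    exact pred_congr (fun p hp => Finset.dvd_prod_of_mem _ hp)
      (by unfold Nat.ModEq; rw [Nat.add_mod_right])
  set q := x / M with hq
  have hqx : q * M ≤ x := Nat.div_mul_le_self x M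
  have hxq : x < (q + 1) * M := by
    have h1 : M * q + x % M = x := Nat.div_add_mod x M
    have h2 : x % M < M := Nat.mod_lt x hM0
    calc x = M * q + x % M := h1.symm
    _ < M * q + M := Nat.add_lt_add_left h2 _
    _ = (q+1)*M := by ring
  have hA' : ((Finset.range M).filter (fun n => ∀ p ∈ P, ¬ p^2 ∣ n ∧ ¬ p^2 ∣ (n+1))).card = A := by
    convert crt_count P hP using 2
  have hcount1 : ((Finset.Ico 1 (1 + q * M)).filter (fun n => ∀ p ∈ P, ¬ p^2 ∣ n ∧ ¬ p^2 ∣ (n+1))).card = q * A :=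
    (block_count M (fun n => ∀ p ∈ P, ¬ p^2 ∣ n ∧ ¬ p^2 ∣ (n+1)) hper 1 q).trans (by rw [hA'])
  have hwindow : ((Finset.Ico 1 (1 + (q+1) * M)).filter (fun n => ∀ p ∈ P, ¬ p^2 ∣ n ∧ ¬ p^2 ∣ (n+1))).card = (q+1) * A :=
    (block_count M (fun n => ∀ p ∈ P, ¬ p^2 ∣ n ∧ ¬ p^2 ∣ (n+1)) hper 1 (q+1)).trans (by rw [hA'])
  have hIcc : Finset.Icc 1 x = Finset.Ico 1 (x+1) := by
    ext n; simp [Finset.mem_Icc, Finset.mem_Ico]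
  have hlow : q * A ≤ ((Finset.Icc 1 x).filter (fun n => ∀ p ∈ P, ¬ p^2 ∣ n ∧ ¬ p^2 ∣ (n+1))).card := by
    rw [hIcc, ← hcount1]
    apply Finset.card_le_card
    apply Finset.filter_subset_filter
    apply Finset.Ico_subset_Ico le_rfl
    omega
  have hhigh : ((Finset.Icc 1 x).filter (fun n => ∀ p ∈ P, ¬ p^2 ∣ n ∧ ¬ p^2 ∣ (n+1))).card ≤ (q+1) * A := by
    rw [hIcc, ← hwindow]
    apply Finset.card_le_card
    apply Finset.filter_subset_filter
    apply Finset.Ico_subset_Ico le_rfl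
    omega
  -- now real arithmetic
  set C : ℝ := (((Finset.Icc 1 x).filter (fun n => ∀ p ∈ P, ¬ p^2 ∣ n ∧ ¬ p^2 ∣ (n+1))).card : ℝ) with hC
  have hMr : (0:ℝ) < (M:ℝ) := by exact_mod_cast hM0
  have hAr : (0:ℝ) ≤ (A:ℝ) := by positivity
  have hAMr : (A:ℝ) ≤ (M:ℝ) := by exact_mod_cast hAM
  have hlowr : (q:ℝ) * A ≤ C := by rw [hC]; exact_mod_cast hlow
  have hhighr : C ≤ ((q:ℝ)+1) * A := by rw [hC]; exact_mod_cast hhigh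
  have hqxr : (q:ℝ) * M ≤ (x:ℝ) := by exact_mod_cast hqx
  have hxqr : (x:ℝ) < ((q:ℝ)+1) * M := by exact_mod_cast hxq
  rw [abs_le]
  constructor
  · -- x*A/M - C ≤ M : x*A/M ≤ (q+1)M * A/M = (q+1)A ≤ C + A ≤ C + M
    have h1 : (x:ℝ) * ((A:ℝ)/(M:ℝ)) ≤ ((q:ℝ)+1) * M * ((A:ℝ)/(M:ℝ)) := by
      apply mul_le_mul_of_nonneg_right (le_of_lt hxqr)
      positivity
    have h2 : ((q:ℝ)+1) * M * ((A:ℝ)/(M:ℝ)) = ((q:ℝ)+1) * A := by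
      field_simp
    linarith
  · -- C - x*A/M ≤ M : C ≤ (q+1)A = qA + A ≤ x*A/M + M since qA ≤ qM*A/M ≤ x*A/M
    have h1 : (q:ℝ) * M * ((A:ℝ)/(M:ℝ)) ≤ (x:ℝ) * ((A:ℝ)/(M:ℝ)) := by
      apply mul_le_mul_of_nonneg_right hqxr
      positivity
    have h2 : (q:ℝ) * M * ((A:ℝ)/(M:ℝ)) = (q:ℝ) * A := by
      field_simp
    linarith

noncomputable def sfC : ℝ := ⨅ s : Finset Nat.Primes, ∏ p ∈ s, (1 - 2 / ((p : ℕ) : ℝ) ^ 2)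

lemma f_nonneg (p : Nat.Primes) : (0:ℝ) ≤ 1 - 2 / ((p : ℕ) : ℝ) ^ 2 := by
  have h2 : 2 ≤ (p:ℕ) := p.2.two_le
  have h4 : (4:ℝ) ≤ ((p:ℕ):ℝ)^2 := by
    have : (2:ℝ) ≤ ((p:ℕ):ℝ) := by exact_mod_cast h2
    nlinarith
  have hpos : (0:ℝ) < ((p:ℕ):ℝ)^2 := by linarith
  have : 2 / ((p:ℕ):ℝ)^2 ≤ 2 / 4 := by
    apply div_le_div_of_nonneg_left (by norm_num) (by norm_num) h4
  linarith

lemma f_le_one (p : Nat.Primes) : 1 - 2 / ((p : ℕ) : ℝ) ^ 2 ≤ 1 := by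
  have h2 : 2 ≤ (p:ℕ) := p.2.two_le
  have hpos : (0:ℝ) < ((p:ℕ):ℝ)^2 := by
    have : (0:ℝ) < ((p:ℕ):ℝ) := by exact_mod_cast p.2.pos
    positivity
  have : 0 ≤ 2 / ((p:ℕ):ℝ)^2 := by positivity
  linarith

lemma hasProd_sfC : HasProd (fun p : Nat.Primes => 1 - 2 / ((p : ℕ) : ℝ) ^ 2) sfC := by
  have hanti : Antitone (fun s : Finset Nat.Primes => ∏ p ∈ s, (1 - 2 / ((p : ℕ) : ℝ) ^ 2)) := by
    intro s t hst
    simp only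
    rw [← Finset.prod_sdiff hst]
    apply mul_le_of_le_one_left
    · exact Finset.prod_nonneg (fun p _ => f_nonneg p)
    · exact Finset.prod_le_one (fun p _ => f_nonneg p) (fun p _ => f_le_one p)
  have hbdd : BddBelow (Set.range (fun s : Finset Nat.Primes => ∏ p ∈ s, (1 - 2 / ((p : ℕ) : ℝ) ^ 2))) := by
    refine ⟨0, ?_⟩
    rintro _ ⟨s, rfl⟩
    exact Finset.prod_nonneg (fun p _ => f_nonneg p)
  exact tendsto_atTop_ciInf hanti hbdd

lemma tprod_eq_sfC : (∏' p : Nat.Primes, (1 - 2 / ((p : ℕ) : ℝ) ^ 2)) = sfC :=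
  hasProd_sfC.tprod_eq

lemma tendsto_partial_prods :
    Filter.Tendsto (fun y : ℕ => ∏ p ∈ (Finset.range (y+1)).filter Nat.Prime, (1 - 2 / (p : ℝ) ^ 2))
      Filter.atTop (nhds sfC) := by
  have hF : Filter.Tendsto (fun y : ℕ => (Finset.range (y+1)).subtype Nat.Prime)
      Filter.atTop (Filter.atTop : Filter (Finset Nat.Primes)) := by
    apply Filter.tendsto_atTop_finset_of_monotone
    · intro a b hab
      apply Finset.subtype_mono
      exact Finset.range_subset_range.mpr (by omega)
    · intro p
      exact ⟨p.1, by simp [Finset.mem_subtype, p.2]⟩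
  have := hasProd_sfC.comp hF
  convert this using 2 with y
  exact (Finset.prod_subtype_eq_prod_filter (fun p : ℕ => 1 - 2 / (p : ℝ) ^ 2)).symm

lemma sf_card_le (y x : ℕ) :
    ((Finset.Icc 1 x).filter (fun n => Squarefree n ∧ Squarefree (n + 1))).card
      ≤ ((Finset.Icc 1 x).filter
        (fun n => ∀ p ∈ (Finset.range (y+1)).filter Nat.Prime, ¬ p^2 ∣ n ∧ ¬ p^2 ∣ (n+1))).card := by
  apply Finset.card_le_card
  apply Finset.monotone_filter_right
  rintro n - ⟨h1, h2⟩ p hp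
  simp only [Finset.mem_filter, Finset.mem_range] at hp
  constructor
  · rw [sq]; exact Nat.squarefree_iff_prime_squarefree.mp h1 p hp.2
  · rw [sq]; exact Nat.squarefree_iff_prime_squarefree.mp h2 p hp.2

lemma ratio_eq (P : Finset ℕ) (hP : ∀ p ∈ P, Nat.Prime p) :
    (∏ p ∈ P, ((p:ℝ)^2 - 2)) / (∏ p ∈ P, (p:ℝ)^2) = ∏ p ∈ P, (1 - 2/(p:ℝ)^2) := by
  rw [← Finset.prod_div_distrib]
  apply Finset.prod_congr rfl
  intro p hp
  have hp0 : ((p:ℝ))^2 ≠ 0 := by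
    have := (hP p hp).pos
    positivity
  field_simp
  rw [sub_div, div_self hp0]

theorem stmt5 :
    Filter.Tendsto
      (fun x : ℕ =>
        (((Finset.Icc 1 x).filter (fun n => Squarefree n ∧ Squarefree (n + 1))).card : ℝ) / x)
      Filter.atTop (nhds (∏' p : Nat.Primes, (1 - 2 / ((p : ℕ) : ℝ) ^ 2))) := by
  rw [tprod_eq_sfC]
  rw [Metric.tendsto_atTop]
  intro ε hε
  -- choose y
  have hpp := Metric.tendsto_atTop.mp tendsto_partial_prods (ε/4) (by linarith)
  obtain ⟨Y, hY⟩ := hpp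
  set y := max Y (max 1 ⌈(12:ℝ)/ε⌉₊) with hy
  have hy1 : 1 ≤ y := le_trans (le_max_left 1 _) (le_max_right Y _)
  have hyY : Y ≤ y := le_max_left _ _
  have hyr : (0:ℝ) < (y:ℝ) := by exact_mod_cast hy1
  have hyε : 3/(y:ℝ) ≤ ε/4 := by
    have h12 : ⌈(12:ℝ)/ε⌉₊ ≤ y := le_trans (le_max_right 1 _) (le_max_right Y _)
    have h12' : (12:ℝ)/ε ≤ (y:ℝ) := le_trans (Nat.le_ceil _) (by exact_mod_cast h12)
    rw [div_le_div_iff₀ hyr (by linarith)]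
    rw [div_le_iff₀ hε] at h12'
    linarith
  set P := (Finset.range (y+1)).filter Nat.Prime with hP
  have hPprime : ∀ p ∈ P, Nat.Prime p := by
    intro p hp
    rw [hP, Finset.mem_filter] at hp
    exact hp.2
  set cy : ℝ := ∏ p ∈ P, (1 - 2/(p:ℝ)^2) with hcy
  have hcyC : |cy - sfC| < ε/4 := by
    have := hY y hyY
    rwa [Real.dist_eq] at this
  set M : ℝ := ∏ p ∈ P, (p:ℝ)^2 with hM
  have hM1 : (0:ℝ) < M := Finset.prod_pos (fun p hp => by
    have := (hPprime p hp).pos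
    positivity)
  -- choose N
  obtain ⟨N, hN⟩ : ∃ N : ℕ, 1 ≤ N ∧ M/(N:ℝ) < ε/4 := by
    obtain ⟨N, hN⟩ := exists_nat_gt (max 1 (4*M/ε))
    refine ⟨N, ?_, ?_⟩
    · have := le_max_left (1:ℝ) (4*M/ε)
      have h1 : (1:ℝ) < N := lt_of_le_of_lt this hN
      exact_mod_cast h1.le
    · have h2 : 4*M/ε < N := lt_of_le_of_lt (le_max_right _ _) hN
      have hN0 : (0:ℝ) < N := lt_trans (by linarith [le_max_left (1:ℝ) (4*M/ε)]) hN
      rw [div_lt_iff₀ hN0]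
      rw [div_lt_iff₀ hε] at h2
      linarith
  refine ⟨N, fun x hx => ?_⟩
  have hx1 : 1 ≤ x := le_trans hN.1 hx
  have hxr : (0:ℝ) < (x:ℝ) := by exact_mod_cast Nat.lt_of_lt_of_le Nat.zero_lt_one hx1
  set S : ℝ := (((Finset.Icc 1 x).filter (fun n => Squarefree n ∧ Squarefree (n + 1))).card : ℝ) with hS
  set T : ℝ := (((Finset.Icc 1 x).filter
      (fun n => ∀ p ∈ P, ¬ p^2 ∣ n ∧ ¬ p^2 ∣ (n+1))).card : ℝ) with hT
  have hST : S ≤ T := by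
    rw [hS, hT, hP]
    exact_mod_cast sf_card_le y x
  have hTS : T ≤ S + (2*(x:ℝ)+1)/(y:ℝ) := by
    rw [hS, hT, hP]
    exact tail_bound y x hy1
  have hmain : |T - (x:ℝ) * cy| ≤ M := by
    rw [hT, hcy, ← ratio_eq P hPprime, hM]
    exact main_count P hPprime x
  rw [Real.dist_eq]
  have e1 : |S/(x:ℝ) - T/(x:ℝ)| ≤ ε/4 := by
    have hnn : 0 ≤ T/(x:ℝ) - S/(x:ℝ) := by
      apply sub_nonneg.mpr
      exact div_le_div_of_nonneg_right hST hxr.le |>.trans_eq rfl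
    rw [abs_sub_comm, abs_of_nonneg hnn]
    have h1 : T/(x:ℝ) - S/(x:ℝ) ≤ ((2*(x:ℝ)+1)/(y:ℝ))/(x:ℝ) := by
      rw [div_sub_div_same]
      exact div_le_div_of_nonneg_right (by linarith) hxr.le
    have h2 : ((2*(x:ℝ)+1)/(y:ℝ))/(x:ℝ) ≤ 3/(y:ℝ) := by
      have hx1r : (1:ℝ) ≤ (x:ℝ) := by exact_mod_cast hx1
      rw [div_div, div_le_div_iff₀ (by positivity) hyr]
      nlinarith [mul_nonneg hyr.le (sub_nonneg.mpr hx1r)]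
    linarith
  have e2 : |T/(x:ℝ) - cy| < ε/4 := by
    have heq : T/(x:ℝ) - cy = (T - (x:ℝ)*cy)/(x:ℝ) := by field_simp
    rw [heq, abs_div, abs_of_pos hxr]
    have h1 : |T - (x:ℝ)*cy|/(x:ℝ) ≤ M/(x:ℝ) := by
      exact div_le_div_of_nonneg_right hmain hxr.le
    have hNx : ((N:ℝ)) ≤ (x:ℝ) := by exact_mod_cast hx
    have hN0 : (0:ℝ) < (N:ℝ) := by exact_mod_cast hN.1
    have h2 : M/(x:ℝ) ≤ M/(N:ℝ) := by
      apply div_le_div_of_nonneg_left (le_of_lt hM1) hN0 hNx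
    linarith [hN.2]
  calc |S/(x:ℝ) - sfC| ≤ |S/(x:ℝ) - T/(x:ℝ)| + |T/(x:ℝ) - sfC| := abs_sub_le _ _ _
    _ ≤ |S/(x:ℝ) - T/(x:ℝ)| + (|T/(x:ℝ) - cy| + |cy - sfC|) := by
        linarith [abs_sub_le (T/(x:ℝ)) cy sfC]
    _ < ε/4 + (ε/4 + ε/4) := by linarith
    _ < ε := by linarith
end

section
/- There exists a constant c > 0 such that for all sufficiently large X, the number of integers n in [W, 2W) (where W = ∏_{p ≤ 20X} p) having more than (log X)² distinct prime factors in the interval [(log X)^5, 20X] is at most W / X^{100}. -/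
open scoped Classical

/-- The primorial of `20 X`: the product of all primes `p ≤ 20 X`. -/
def W20 (X : ℕ) : ℕ := ∏ p ∈ (Finset.range (20 * X + 1)).filter Nat.Prime, p

lemma count_multiples_le (a b m : ℕ) (ha : 1 ≤ a) :
    ((((Finset.Ico a b).filter (fun n => m ∣ n)).card : ℝ)) ≤ (b : ℝ) / m := by
  rcases Nat.eq_zero_or_pos m with hm | hm
  · subst hm
    have h : (Finset.Ico a b).filter (fun n => 0 ∣ n) = ∅ := by
      apply Finset.filter_false_of_mem
      intro n hn h0
      rw [zero_dvd_iff] at h0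
      rw [Finset.mem_Ico] at hn
      omega
    rw [h]
    simp
  · have hcard : ((Finset.Ico a b).filter (fun n => m ∣ n)).card
        ≤ (Finset.Icc 1 ((b - 1) / m)).card := by
      apply Finset.card_le_card_of_injOn (fun n => n / m)
      · intro n hn
        simp only [Finset.mem_coe, Finset.mem_filter, Finset.mem_Ico] at hn
        obtain ⟨⟨h1, h2⟩, hdvd⟩ := hn
        have hn1 : 1 ≤ n := le_trans ha h1
        have hmn : m ≤ n := Nat.le_of_dvd (by omega) hdvd
        simp only [Finset.mem_coe, Finset.mem_Icc]
        exact ⟨(Nat.one_le_div_iff hm).2 hmn, Nat.div_le_div_right (by omega)⟩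
      · intro x hx y hy hxy
        simp only [Finset.coe_filter, Set.mem_setOf_eq] at hx hy
        have hxm := Nat.div_mul_cancel hx.2
        have hym := Nat.div_mul_cancel hy.2
        calc x = x / m * m := hxm.symm
        _ = y / m * m := by simp only at hxy; rw [hxy]
        _ = y := hym
    have h2 : ((Finset.Icc 1 ((b - 1) / m)).card : ℝ) ≤ (b : ℝ) / m := by
      rw [Nat.card_Icc]
      calc (((b - 1) / m + 1 - 1 : ℕ) : ℝ) = (((b - 1) / m : ℕ) : ℝ) := by norm_num
      _ ≤ ((b - 1 : ℕ) : ℝ) / m := Nat.cast_div_le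
      _ ≤ (b : ℝ) / m := by
          gcongr
          exact_mod_cast Nat.sub_le b 1
    calc ((((Finset.Ico a b).filter (fun n => m ∣ n)).card : ℝ))
        ≤ ((Finset.Icc 1 ((b - 1) / m)).card : ℝ) := by exact_mod_cast hcard
    _ ≤ (b : ℝ) / m := h2

lemma card_filter_bind (s : Finset ℕ) (q : ℝ → Prop) [DecidablePred q]
    [DecidablePred (fun p : ℕ => q (p : ℝ))] :
    (Finset.filter q (do let a ← s; pure ((a : ℝ)))).card
      = (s.filter (fun p : ℕ => q (p : ℝ))).card := by
  have h1 : ((do let a ← s; pure ((a : ℝ))) : Finset ℝ) = s.image (fun a : ℕ => (a : ℝ)) := by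
    simp [Finset.bind_def, Finset.sup_singleton_apply]
  rw [h1]
  rw [Finset.filter_image]
  rw [Finset.card_image_of_injective _ Nat.cast_injective]
  congr!

theorem stmt10 :
    ∃ c : ℝ, 0 < c ∧ ∀ᶠ X : ℕ in Filter.atTop,
      (((Finset.Ico (W20 X) (2 * W20 X)).filter
          (fun n => (Real.log X) ^ 2 <
            ((n.primeFactors.filter
              (fun p => (Real.log X) ^ 5 ≤ (p : ℝ) ∧ (p : ℝ) ≤ 20 * X)).card : ℝ))).card : ℝ)
        ≤ (W20 X : ℝ) / (X : ℝ) ^ 100 := by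
  refine ⟨1, one_pos, ?_⟩
  have hlog : Filter.Tendsto (fun X : ℕ => Real.log X) Filter.atTop Filter.atTop :=
    Real.tendsto_log_atTop.comp tendsto_natCast_atTop_atTop
  filter_upwards [hlog.eventually_ge_atTop 1000, Filter.eventually_ge_atTop 20] with X hL1000 hX20
  set L : ℝ := Real.log X with hLdef
  set W : ℕ := W20 X with hWdef
  set F : ℕ → Finset ℕ := fun n => n.primeFactors.filter
      (fun p : ℕ => L ^ 5 ≤ (p : ℝ) ∧ (p : ℝ) ≤ 20 * X) with hFdef
  -- rewrite the goal's coerced filter into `F`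
  have hgoal : ∀ n : ℕ, (Finset.filter (fun p : ℝ => L ^ 5 ≤ p ∧ p ≤ 20 * X)
      (do let a ← n.primeFactors; pure ((a : ℝ)))).card = (F n).card := fun n =>
    card_filter_bind n.primeFactors (fun p : ℝ => L ^ 5 ≤ p ∧ p ≤ 20 * X)
  simp only [hgoal]
  set P : Finset ℕ := (Finset.range (20 * X + 1)).filter Nat.Prime with hPdef
  set B : Finset ℕ := (Finset.Ico W (2 * W)).filter (fun n => L ^ 2 < ((F n).card : ℝ)) with hBdef
  show (B.card : ℝ) ≤ (W : ℝ) / (X : ℝ) ^ 100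
  have hXR : (20 : ℝ) ≤ (X : ℕ) := by exact_mod_cast hX20
  have hX0 : (0 : ℝ) < X := by linarith
  have hL0 : (0 : ℝ) ≤ L := le_trans (by norm_num) hL1000
  have hW1 : 1 ≤ W := by
    rw [hWdef, W20]
    apply Finset.one_le_prod'
    intro p hp
    exact (Nat.Prime.one_lt (Finset.mem_filter.1 hp).2).le
  have hW0 : (0 : ℝ) < W := by exact_mod_cast hW1
  set a : ℝ := Real.exp 8 - 1 with hadef
  have hexp1 : Real.exp 1 ≤ 2.72 := by
    have := Real.exp_one_lt_d9
    linarith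
  have hexp8 : Real.exp 8 ≤ 3000 := by
    have h8 : Real.exp 8 = (Real.exp 1) ^ 8 := by
      rw [← Real.exp_nat_mul]; norm_num
    rw [h8]
    calc (Real.exp 1) ^ 8 ≤ (2.72 : ℝ) ^ 8 := by
          apply pow_le_pow_left₀ (Real.exp_nonneg 1) hexp1
    _ ≤ 3000 := by norm_num
  have ha0 : 0 ≤ a := by
    have : (1 : ℝ) ≤ Real.exp 8 := Real.one_le_exp (by norm_num)
    rw [hadef]; linarith
  have ha2999 : a ≤ 2999 := by rw [hadef]; linarith
  have haP : a + 1 = Real.exp 8 := by rw [hadef]; ring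
  -- F n ⊆ P
  have hFP : ∀ n : ℕ, F n ⊆ P := by
    intro n p hp
    rw [hFdef] at hp
    simp only [Finset.mem_filter, Nat.mem_primeFactors] at hp
    obtain ⟨⟨hpp, hpn, -⟩, -, hple⟩ := hp
    rw [hPdef, Finset.mem_filter, Finset.mem_range]
    refine ⟨?_, hpp⟩
    have h1 : (p : ℝ) ≤ ((20 * X : ℕ) : ℝ) := by push_cast; linarith
    have := Nat.cast_le.mp h1
    omega
  -- Step A : crude lower bound on the moment sum
  have stepA : (B.card : ℝ) * Real.exp (8 * L ^ 2)
      ≤ ∑ n ∈ Finset.Ico W (2 * W), Real.exp (8 * ((F n).card : ℝ)) := by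
    have h1 : ∀ n ∈ B, Real.exp (8 * L ^ 2) ≤ Real.exp (8 * ((F n).card : ℝ)) := by
      intro n hn
      rw [hBdef, Finset.mem_filter] at hn
      apply Real.exp_le_exp.2
      nlinarith [hn.2]
    calc (B.card : ℝ) * Real.exp (8 * L ^ 2)
        ≤ ∑ n ∈ B, Real.exp (8 * ((F n).card : ℝ)) := by
          have := Finset.card_nsmul_le_sum B
            (fun n => Real.exp (8 * ((F n).card : ℝ))) (Real.exp (8 * L ^ 2)) h1
          simpa [nsmul_eq_mul] using this
    _ ≤ ∑ n ∈ Finset.Ico W (2 * W), Real.exp (8 * ((F n).card : ℝ)) := by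
          apply Finset.sum_le_sum_of_subset_of_nonneg (Finset.filter_subset _ _)
          intro i _ _
          positivity
  -- Step B : binomial expansion of each term
  have stepB : ∀ n : ℕ, Real.exp (8 * ((F n).card : ℝ))
      = ∑ S ∈ (F n).powerset, a ^ S.card := by
    intro n
    have h1 : Real.exp (8 * ((F n).card : ℝ)) = ∏ _p ∈ F n, (a + 1) := by
      rw [haP, Finset.prod_const, mul_comm, Real.exp_nat_mul]
    rw [h1, Finset.prod_add]
    apply Finset.sum_congr rfl
    intro S _
    simp [Finset.prod_const]
  -- Step C : extend each powerset sum to the full prime powerset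
  have stepC : ∀ n : ℕ, ∑ S ∈ (F n).powerset, a ^ S.card
      = ∑ S ∈ P.powerset, (if S ⊆ F n then a ^ S.card else 0) := by
    intro n
    have e1 : ∑ S ∈ (F n).powerset, a ^ S.card
        = ∑ S ∈ (F n).powerset, (if S ⊆ F n then a ^ S.card else 0) := by
      apply Finset.sum_congr rfl
      intro S hS
      rw [if_pos (Finset.mem_powerset.1 hS)]
    rw [e1]
    apply Finset.sum_subset (Finset.powerset_mono.2 (hFP n))
    intro S _ hS
    rw [if_neg]
    intro h
    exact hS (Finset.mem_powerset.2 h)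
  -- Step D : swap the order of summation
  have stepD : ∑ n ∈ Finset.Ico W (2 * W), ∑ S ∈ P.powerset,
        (if S ⊆ F n then a ^ S.card else 0)
      = ∑ S ∈ P.powerset,
        (((Finset.Ico W (2 * W)).filter (fun n => S ⊆ F n)).card : ℝ) * a ^ S.card := by
    rw [Finset.sum_comm]
    apply Finset.sum_congr rfl
    intro S _
    rw [← Finset.sum_filter, Finset.sum_const, nsmul_eq_mul]
  -- Step E : count multiples
  have stepE : ∀ S ∈ P.powerset,
      (((Finset.Ico W (2 * W)).filter (fun n => S ⊆ F n)).card : ℝ)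
        ≤ (2 * W : ℝ) / ∏ p ∈ S, (p : ℝ) := by
    intro S hS
    rw [Finset.mem_powerset] at hS
    have hsub : (Finset.Ico W (2 * W)).filter (fun n => S ⊆ F n)
        ⊆ (Finset.Ico W (2 * W)).filter (fun n => (∏ p ∈ S, p) ∣ n) := by
      apply Finset.monotone_filter_right
      intro n _ hn
      apply Finset.prod_primes_dvd
      · intro p hp
        have := (Finset.mem_filter.1 (hS hp)).2
        exact this.prime
      · intro p hp
        have := hn hp
        rw [hFdef] at this
        simp only [Finset.mem_filter, Nat.mem_primeFactors] at this
        exact this.1.2.1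
    calc (((Finset.Ico W (2 * W)).filter (fun n => S ⊆ F n)).card : ℝ)
        ≤ (((Finset.Ico W (2 * W)).filter (fun n => (∏ p ∈ S, p) ∣ n)).card : ℝ) := by
          exact_mod_cast Finset.card_le_card hsub
    _ ≤ ((2 * W : ℕ) : ℝ) / ((∏ p ∈ S, p : ℕ) : ℝ) := count_multiples_le W (2 * W) _ hW1
    _ = (2 * W : ℝ) / ∏ p ∈ S, (p : ℝ) := by push_cast; rfl
  -- Step F : resum into a product
  have stepF : ∑ S ∈ P.powerset, ((2 * W : ℝ) / ∏ p ∈ S, (p : ℝ)) * a ^ S.card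
      = (2 * W : ℝ) * ∏ p ∈ P, (a / p + 1) := by
    rw [Finset.prod_add, Finset.mul_sum]
    apply Finset.sum_congr rfl
    intro S hS
    rw [Finset.mem_powerset] at hS
    rw [Finset.prod_const_one, mul_one, Finset.prod_div_distrib, Finset.prod_const]
    ring
  -- Step G : bound the product via exp and harmonic sums
  have stepG : ∏ p ∈ P, (a / (p : ℝ) + 1) ≤ Real.exp (a * (1 + Real.log (20 * X))) := by
    have h1 : ∏ p ∈ P, (a / (p : ℝ) + 1) ≤ ∏ p ∈ P, Real.exp (a / p) := by
      apply Finset.prod_le_prod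
      · intro p hp
        have := (Finset.mem_filter.1 hp).2.pos
        have hposp : (0 : ℝ) < p := by exact_mod_cast this
        positivity
      · intro p hp
        exact Real.add_one_le_exp _
    have h2 : ∏ p ∈ P, Real.exp (a / (p : ℝ)) = Real.exp (∑ p ∈ P, a / p) :=
      (Real.exp_sum P _).symm
    have h3 : ∑ p ∈ P, a / (p : ℝ) = a * ∑ p ∈ P, (p : ℝ)⁻¹ := by
      rw [Finset.mul_sum]
      apply Finset.sum_congr rfl
      intro p _
      rw [div_eq_mul_inv]
    have h4 : ∑ p ∈ P, ((p : ℕ) : ℝ)⁻¹ ≤ ∑ d ∈ Finset.Icc 1 (20 * X), ((d : ℕ) : ℝ)⁻¹ := by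
      apply Finset.sum_le_sum_of_subset_of_nonneg
      · intro p hp
        rw [hPdef, Finset.mem_filter, Finset.mem_range] at hp
        rw [Finset.mem_Icc]
        exact ⟨hp.2.one_lt.le, by omega⟩
      · intro i _ _
        positivity
    have h5 : ∑ d ∈ Finset.Icc 1 (20 * X), ((d : ℕ) : ℝ)⁻¹ ≤ 1 + Real.log (20 * X) := by
      have h := harmonic_le_one_add_log (20 * X)
      rw [harmonic_eq_sum_Icc] at h
      push_cast at h ⊢
      exact h
    calc ∏ p ∈ P, (a / (p : ℝ) + 1) ≤ Real.exp (∑ p ∈ P, a / p) := by rw [← h2]; exact h1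
    _ ≤ Real.exp (a * (1 + Real.log (20 * X))) := by
        apply Real.exp_le_exp.2
        calc ∑ p ∈ P, a / (p : ℝ) = a * ∑ p ∈ P, (p : ℝ)⁻¹ := h3
        _ ≤ a * (1 + Real.log (20 * X)) := by
            apply mul_le_mul_of_nonneg_left (le_trans h4 h5) ha0
  -- combine all steps
  have main : (B.card : ℝ) * Real.exp (8 * L ^ 2)
      ≤ (2 * W : ℝ) * Real.exp (a * (1 + Real.log (20 * X))) := by
    calc (B.card : ℝ) * Real.exp (8 * L ^ 2)
        ≤ ∑ n ∈ Finset.Ico W (2 * W), Real.exp (8 * ((F n).card : ℝ)) := stepA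
    _ = ∑ n ∈ Finset.Ico W (2 * W), ∑ S ∈ P.powerset,
          (if S ⊆ F n then a ^ S.card else 0) := by
        apply Finset.sum_congr rfl
        intro n _
        rw [stepB n, stepC n]
    _ = ∑ S ∈ P.powerset,
          (((Finset.Ico W (2 * W)).filter (fun n => S ⊆ F n)).card : ℝ) * a ^ S.card := stepD
    _ ≤ ∑ S ∈ P.powerset, ((2 * W : ℝ) / ∏ p ∈ S, (p : ℝ)) * a ^ S.card := by
        apply Finset.sum_le_sum
        intro S hS
        exact mul_le_mul_of_nonneg_right (stepE S hS) (pow_nonneg ha0 _)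
    _ = (2 * W : ℝ) * ∏ p ∈ P, (a / p + 1) := stepF
    _ ≤ (2 * W : ℝ) * Real.exp (a * (1 + Real.log (20 * X))) := by
        apply mul_le_mul_of_nonneg_left stepG (by positivity)
  -- final numeric comparison
  have hlog20X : Real.log (20 * X) ≤ 2 * L := by
    have h1 : (20 : ℝ) * X ≤ (X : ℝ) ^ 2 := by nlinarith
    calc Real.log (20 * X) ≤ Real.log ((X : ℝ) ^ 2) := by
          apply Real.log_le_log (by positivity) h1
    _ = 2 * L := by rw [Real.log_pow]; push_cast; rw [hLdef]
  have hX100 : (X : ℝ) ^ 100 = Real.exp (100 * L) := by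
    rw [hLdef, show ((100 : ℝ)) = ((100 : ℕ) : ℝ) by norm_num, Real.exp_nat_mul,
      Real.exp_log hX0]
  have hfin : (2 : ℝ) * Real.exp (a * (1 + Real.log (20 * X))) * (X : ℝ) ^ 100
      ≤ Real.exp (8 * L ^ 2) := by
    have h2 : (2 : ℝ) ≤ Real.exp 1 := by
      have := Real.add_one_le_exp (1 : ℝ)
      linarith
    calc (2 : ℝ) * Real.exp (a * (1 + Real.log (20 * X))) * (X : ℝ) ^ 100
        ≤ Real.exp 1 * Real.exp (a * (1 + 2 * L)) * Real.exp (100 * L) := by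
          rw [hX100]
          apply mul_le_mul ?_ le_rfl (Real.exp_nonneg _) (by positivity)
          apply mul_le_mul h2 ?_ (Real.exp_nonneg _) (Real.exp_nonneg _)
          apply Real.exp_le_exp.2
          apply mul_le_mul_of_nonneg_left ?_ ha0
          linarith
    _ = Real.exp (1 + a * (1 + 2 * L) + 100 * L) := by
          rw [← Real.exp_add, ← Real.exp_add]
    _ ≤ Real.exp (8 * L ^ 2) := by
          apply Real.exp_le_exp.2
          nlinarith [hL1000, ha2999, ha0]
  -- conclude
  have hexp_pos : (0 : ℝ) < Real.exp (8 * L ^ 2) := Real.exp_pos _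
  have hXpos : (0 : ℝ) < (X : ℝ) ^ 100 := by positivity
  have h6 : (2 * W : ℝ) * Real.exp (a * (1 + Real.log (20 * X)))
      ≤ ((W : ℝ) / (X : ℝ) ^ 100) * Real.exp (8 * L ^ 2) := by
    rw [div_mul_eq_mul_div, le_div_iff₀ hXpos]
    calc (2 * W : ℝ) * Real.exp (a * (1 + Real.log (20 * X))) * (X : ℝ) ^ 100
        = (W : ℝ) * ((2 : ℝ) * Real.exp (a * (1 + Real.log (20 * X))) * (X : ℝ) ^ 100) := by
          ring
    _ ≤ (W : ℝ) * Real.exp (8 * L ^ 2) := by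
          apply mul_le_mul_of_nonneg_left hfin (by positivity)
  exact le_of_mul_le_mul_right (main.trans h6) hexp_pos
end
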